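/- Let ρ be a dissectible solution notion and f : Θ → X a social choice function. Then for every nonempty E ⊆ Θ and all θ, θ' ∈ Θ: if θ ∈ E and θ' ∈ γ^{(ρ,f)}[E,θ], then θ' ∈ E and θ ∈ γ^{(ρ,f)}[E,θ']. -/
import Mathlib


open scoped Classical

namespace SeqMech

variable {I : Type*} {Θi : I → Type*} {X : Type*}

/-- Projection of a set of states onto agent `i`'s coordinate. -/
def proj (i : I) (E : Set (∀ j, Θi j)) : Set (Θi i) :=
  (fun θ => θ i) '' E

/-- Projection of a set of states onto the coordinates of the agents other than `i`. -/
def projNeg (i : I) (E : Set (∀ j, Θi j)) :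
    Set (∀ j : {j : I // j ≠ i}, Θi j.1) :=
  (fun θ (j : {j : I // j ≠ i}) => θ j.1) '' E

/-- The semi-operator property: nonempty sets are mapped to nonempty sets. -/
def IsSemiOp (γ : Set (∀ j, Θi j) → (∀ j, Θi j) → Set (∀ j, Θi j)) : Prop :=
  ∀ E θ, E.Nonempty → (γ E θ).Nonempty

/-- A solution notion: `R f γ E θ θ' i Fhat` means `ρ[f,(γ,E),θ,θ',i,Fhat] = 1`.  Its value
depends only on `(f, γ_i[E,θ], θ_i, θ'_i, Fhat_{-i})`. -/
structure SolutionNotion (I : Type*) (Θi : I → Type*) (X : Type*) where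
  R : ((∀ j, Θi j) → X) →
      (Set (∀ j, Θi j) → (∀ j, Θi j) → Set (∀ j, Θi j)) →
      Set (∀ j, Θi j) → (∀ j, Θi j) → (∀ j, Θi j) → I → Set (∀ j, Θi j) → Prop
  meas : ∀ f γ γ' E E' θ τ θ' τ' (i : I) Fhat Fhat',
      proj i (γ E θ) = proj i (γ' E' τ) →
      θ i = τ i → θ' i = τ' i →
      projNeg i Fhat = projNeg i Fhat' →
      (R f γ E θ θ' i Fhat ↔ R f γ' E' τ τ' i Fhat')

/-- Dissectibility of a solution notion. -/
def Dissectible (ρ : SolutionNotion I Θi X) : Prop :=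
  ∀ f γ E θ θ' (i : I) Fhat,
    IsSemiOp γ → E.Nonempty → θ ∈ E → θ' ∈ E →
    (¬ ρ.R f γ E θ θ' i Fhat ↔
      ∃ τ ∈ γ E θ, ∃ γ' : Set (∀ j, Θi j) → (∀ j, Θi j) → Set (∀ j, Θi j),
        IsSemiOp γ' ∧ γ' E θ = {θ, τ} ∧ ¬ ρ.R f γ' E θ θ' i Fhat)

/-- `θ >_i^{[(ρ,f),(γ,E)]} θ'`. -/
def gtRel (ρ : SolutionNotion I Θi X) (f : (∀ j, Θi j) → X)
    (γ : Set (∀ j, Θi j) → (∀ j, Θi j) → Set (∀ j, Θi j))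
    (E : Set (∀ j, Θi j)) (i : I) (θ θ' : ∀ j, Θi j) : Prop :=
  θ ∈ E ∧ θ' ∈ E ∧ ¬ ρ.R f γ E θ θ' i E

/-- `θ ∼_i^{[(ρ,f),(γ,E)]} θ'`. -/
def simRel (ρ : SolutionNotion I Θi X) (f : (∀ j, Θi j) → X)
    (γ : Set (∀ j, Θi j) → (∀ j, Θi j) → Set (∀ j, Θi j))
    (E : Set (∀ j, Θi j)) (i : I) (θ θ' : ∀ j, Θi j) : Prop :=
  θ i = θ' i ∨ gtRel ρ f γ E i θ θ' ∨ gtRel ρ f γ E i θ' θ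

/-- `canonN ρ f n` is the semi-operator `γ^{(ρ,f)-(n+1)}`. -/
noncomputable def canonN (ρ : SolutionNotion I Θi X) (f : (∀ j, Θi j) → X) :
    ℕ → Set (∀ j, Θi j) → (∀ j, Θi j) → Set (∀ j, Θi j)
  | 0 => fun E θ => if θ ∈ E then {θ} else E
  | n + 1 => fun E θ =>
      if θ ∈ E then
        ⋃ τ ∈ canonN ρ f n E θ,
          {θ' ∈ E | ∀ i, simRel ρ f (canonN ρ f n) E i τ θ'}
      else E

/-- The canonical semi-operator `γ^{(ρ,f)}`. -/
noncomputable def canon (ρ : SolutionNotion I Θi X) (f : (∀ j, Θi j) → X) :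
    Set (∀ j, Θi j) → (∀ j, Θi j) → Set (∀ j, Θi j) :=
  fun E θ => if θ ∈ E then ⋃ n, canonN ρ f n E θ else E

section Aux

variable (ρ : SolutionNotion I Θi X) (f : (∀ j, Θi j) → X)

lemma canonN_succ_mem {E : Set (∀ j, Θi j)} {θ θ' : ∀ j, Θi j} {n : ℕ} (hθ : θ ∈ E) :
    θ' ∈ canonN ρ f (n+1) E θ ↔
      ∃ τ ∈ canonN ρ f n E θ, θ' ∈ E ∧ ∀ i, simRel ρ f (canonN ρ f n) E i τ θ' := by
  simp only [canonN, if_pos hθ, Set.mem_iUnion, Set.mem_setOf_eq]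
  tauto

lemma simRel_symm {γ E} {i : I} {θ θ' : ∀ j, Θi j}
    (h : simRel ρ f γ E i θ θ') : simRel ρ f γ E i θ' θ := by
  rcases h with h | h | h
  · exact Or.inl h.symm
  · exact Or.inr (Or.inr h)
  · exact Or.inr (Or.inl h)

lemma canonN_subset {E : Set (∀ j, Θi j)} {θ : ∀ j, Θi j} (hθ : θ ∈ E) :
    ∀ n, canonN ρ f n E θ ⊆ E := by
  intro n
  cases n with
  | zero => simp only [canonN, if_pos hθ]; exact Set.singleton_subset_iff.mpr hθ
  | succ n =>
      intro x hx
      exact ((canonN_succ_mem ρ f hθ).mp hx).choose_spec.2.1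

lemma canonN_mono_succ {E : Set (∀ j, Θi j)} {θ : ∀ j, Θi j} (hθ : θ ∈ E) (n : ℕ) :
    canonN ρ f n E θ ⊆ canonN ρ f (n+1) E θ := by
  intro x hx
  exact (canonN_succ_mem ρ f hθ).mpr
    ⟨x, hx, canonN_subset ρ f hθ n hx, fun i => Or.inl rfl⟩

lemma canonN_mono_le {E : Set (∀ j, Θi j)} {θ : ∀ j, Θi j} (hθ : θ ∈ E) {n m : ℕ}
    (h : n ≤ m) : canonN ρ f n E θ ⊆ canonN ρ f m E θ := by
  induction h with
  | refl => exact subset_rfl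
  | step _ ih => exact ih.trans (canonN_mono_succ ρ f hθ _)

lemma self_mem_canonN {E : Set (∀ j, Θi j)} {θ : ∀ j, Θi j} (hθ : θ ∈ E) (n : ℕ) :
    θ ∈ canonN ρ f n E θ :=
  canonN_mono_le ρ f hθ (Nat.zero_le n) (by simp [canonN, if_pos hθ])

lemma isSemiOp_canonN (n : ℕ) : IsSemiOp (canonN ρ f n) := by
  intro E θ hE
  by_cases hθ : θ ∈ E
  · exact ⟨θ, self_mem_canonN ρ f hθ n⟩
  · cases n with
    | zero => simpa [canonN, if_neg hθ] using hE
    | succ n => simpa [canonN, if_neg hθ] using hE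

lemma simRel_mono_succ (hρ : Dissectible ρ) {E : Set (∀ j, Θi j)} (hE : E.Nonempty)
    {i : I} {τ θ' : ∀ j, Θi j} {n : ℕ}
    (h : simRel ρ f (canonN ρ f n) E i τ θ') :
    simRel ρ f (canonN ρ f (n+1)) E i τ θ' := by
  have key : ∀ a b : ∀ j, Θi j, gtRel ρ f (canonN ρ f n) E i a b →
      gtRel ρ f (canonN ρ f (n+1)) E i a b := by
    rintro a b ⟨ha, hb, hR⟩
    refine ⟨ha, hb, ?_⟩
    obtain ⟨t0, ht0, γ', hγ's, hγ'eq, hnR⟩ :=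
      (hρ f (canonN ρ f n) E a b i E (isSemiOp_canonN ρ f n) hE ha hb).mp hR
    exact (hρ f (canonN ρ f (n+1)) E a b i E (isSemiOp_canonN ρ f (n+1)) hE ha hb).mpr
      ⟨t0, canonN_mono_succ ρ f ha n ht0, γ', hγ's, hγ'eq, hnR⟩
  rcases h with h | h | h
  · exact Or.inl h
  · exact Or.inr (Or.inl (key _ _ h))
  · exact Or.inr (Or.inr (key _ _ h))

lemma simRel_mono_le (hρ : Dissectible ρ) {E : Set (∀ j, Θi j)} (hE : E.Nonempty)
    {i : I} {τ θ' : ∀ j, Θi j} {n m : ℕ} (hnm : n ≤ m)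
    (h : simRel ρ f (canonN ρ f n) E i τ θ') :
    simRel ρ f (canonN ρ f m) E i τ θ' := by
  induction hnm with
  | refl => exact h
  | step _ ih => exact simRel_mono_succ ρ f hρ hE ih

/-- Step lemma: extend membership by one simRel step (at any level). -/
lemma canonN_step (hρ : Dissectible ρ) {E : Set (∀ j, Θi j)} (hE : E.Nonempty)
    {θ x x' : ∀ j, Θi j} (hθ : θ ∈ E) {n m : ℕ}
    (hx : x ∈ canonN ρ f n E θ) (hx' : x' ∈ E)
    (hsim : ∀ i, simRel ρ f (canonN ρ f m) E i x x') :
    x' ∈ canonN ρ f (max n m + 1) E θ := by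
  refine (canonN_succ_mem ρ f hθ).mpr
    ⟨x, canonN_mono_le ρ f hθ (le_max_left n m) hx, hx', fun i =>
      simRel_mono_le ρ f hρ hE (le_max_right n m) (hsim i)⟩

/-- Transitivity lemma. -/
lemma canonN_trans (hρ : Dissectible ρ) {E : Set (∀ j, Θi j)} (hE : E.Nonempty) :
    ∀ n (a b : ∀ j, Θi j), b ∈ E → a ∈ canonN ρ f n E b →
      ∀ m (c : ∀ j, Θi j), c ∈ E → b ∈ canonN ρ f m E c →
        ∃ k, a ∈ canonN ρ f k E c := by
  intro n
  induction n with
  | zero =>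
      intro a b hb ha m c hc hbc
      simp only [canonN, if_pos hb, Set.mem_singleton_iff] at ha
      exact ⟨m, ha ▸ hbc⟩
  | succ n ih =>
      intro a b hb ha m c hc hbc
      obtain ⟨τ, hτ, haE, hsim⟩ := (canonN_succ_mem ρ f hb).mp ha
      obtain ⟨k, hk⟩ := ih τ b hb hτ m c hc hbc
      exact ⟨max k n + 1, canonN_step ρ f hρ hE hc hk haE hsim⟩

lemma canonN_symm (hρ : Dissectible ρ) {E : Set (∀ j, Θi j)} (hE : E.Nonempty) :
    ∀ n (θ θ' : ∀ j, Θi j), θ ∈ E → θ' ∈ canonN ρ f n E θ →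
      ∃ k, θ ∈ canonN ρ f k E θ' := by
  intro n
  induction n with
  | zero =>
      intro θ θ' hθ h
      simp only [canonN, if_pos hθ, Set.mem_singleton_iff] at h
      subst h
      exact ⟨0, by simp [canonN, hθ]⟩
  | succ n ih =>
      intro θ θ' hθ h
      obtain ⟨τ, hτ, hθ'E, hsim⟩ := (canonN_succ_mem ρ f hθ).mp h
      have hτE : τ ∈ E := canonN_subset ρ f hθ n hτ
      obtain ⟨k, hk⟩ := ih θ τ hθ hτ
      -- τ ∈ canonN (n+1) E θ'
      have hτθ' : τ ∈ canonN ρ f (n+1) E θ' :=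
        (canonN_succ_mem ρ f hθ'E).mpr
          ⟨θ', self_mem_canonN ρ f hθ'E n, hτE, fun i => simRel_symm ρ f (hsim i)⟩
      exact canonN_trans ρ f hρ hE k θ τ hτE hk (n+1) θ' hθ'E hτθ'

end Aux

/-- symmetry of the canonical semi-operator of a dissectible solution
notion: if `θ ∈ E` and `θ' ∈ γ^{(ρ,f)}[E,θ]`, then `θ' ∈ E` and `θ ∈ γ^{(ρ,f)}[E,θ']`. -/
theorem canon_symm
    [Fintype I] [Nonempty I] [∀ i, Fintype (Θi i)] [∀ i, Nonempty (Θi i)]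
    (ρ : SolutionNotion I Θi X) (hρ : Dissectible ρ) (f : (∀ j, Θi j) → X)
    (E : Set (∀ j, Θi j)) (hE : E.Nonempty)
    (θ θ' : ∀ j, Θi j) (hθ : θ ∈ E) (hθ' : θ' ∈ canon ρ f E θ) :
    θ' ∈ E ∧ θ ∈ canon ρ f E θ' := by
  simp only [canon, if_pos hθ, Set.mem_iUnion] at hθ'
  obtain ⟨n, hn⟩ := hθ'
  have hθ'E : θ' ∈ E := canonN_subset ρ f hθ n hn
  obtain ⟨k, hk⟩ := canonN_symm ρ f hρ hE n θ θ' hθ hn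
  exact ⟨hθ'E, by simp only [canon, if_pos hθ'E, Set.mem_iUnion]; exact ⟨k, hk⟩⟩

end SeqMech
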